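/- In ℂ⁴ ⊗ ℂ⁴, there is no product vector α ⊗ β with ⟨α⊗β, α₁⟩ ≠ 0 and ⟨α⊗β, α_k⟩ = 0 for k = 2,3,4,5, where α₁,…,α₅ are the states built from parameters a,b,c,d,e,f,g,h ∈ (0,1) with a²+b²=c²+d²=e²+f²=g²+h²=1 as: α₁ = e(a|00⟩+b|11⟩)+f(c|22⟩+d|33⟩), α₂ = f(a|00⟩+b|11⟩)−e(c|22⟩+d|33⟩), α₃ = g(b|00⟩−a|11⟩)+h(d|22⟩−c|33⟩), α₄ = h(b|00⟩−a|11⟩)−g(d|22⟩−c|33⟩), α₅ = |01⟩. -/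

import Mathlib

open scoped ComplexInnerProductSpace

/-- The five states α₁,…,α₅ in ℂ⁴ ⊗ ℂ⁴ built from real parameters. -/
noncomputable def alphaSt (a b c d e f g h : ℝ) : Fin 5 → EuclideanSpace ℂ (Fin 4 × Fin 4)
  | 0 => WithLp.toLp 2 fun p => if p = (0, 0) then (e * a : ℝ) else if p = (1, 1) then (e * b : ℝ)
      else if p = (2, 2) then (f * c : ℝ) else if p = (3, 3) then (f * d : ℝ) else 0
  | 1 => WithLp.toLp 2 fun p => if p = (0, 0) then (f * a : ℝ) else if p = (1, 1) then (f * b : ℝ)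
      else if p = (2, 2) then (-(e * c) : ℝ) else if p = (3, 3) then (-(e * d) : ℝ) else 0
  | 2 => WithLp.toLp 2 fun p => if p = (0, 0) then (g * b : ℝ) else if p = (1, 1) then (-(g * a) : ℝ)
      else if p = (2, 2) then (h * d : ℝ) else if p = (3, 3) then (-(h * c) : ℝ) else 0
  | 3 => WithLp.toLp 2 fun p => if p = (0, 0) then (h * b : ℝ) else if p = (1, 1) then (-(h * a) : ℝ)
      else if p = (2, 2) then (-(g * d) : ℝ) else if p = (3, 3) then (g * c : ℝ) else 0
  | 4 => WithLp.toLp 2 fun p => if p = (0, 1) then 1 else 0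

/-- Product vector α ⊗ β in ℂ⁴ ⊗ ℂ⁴. -/
noncomputable def prodVec4 (α β : EuclideanSpace ℂ (Fin 4)) :
    EuclideanSpace ℂ (Fin 4 × Fin 4) :=
  WithLp.toLp 2 fun p => α p.1 * β p.2

/-- No product vector has nonzero overlap with α₁ and zero overlap with
α₂, α₃, α₄, α₅. -/
theorem stmt17 (a b c d e f g h : ℝ)
    (ha : 0 < a) (ha1 : a < 1) (hb : 0 < b) (hb1 : b < 1)
    (hc : 0 < c) (hc1 : c < 1) (hd : 0 < d) (hd1 : d < 1)
    (he : 0 < e) (he1 : e < 1) (hf : 0 < f) (hf1 : f < 1)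
    (hg : 0 < g) (hg1 : g < 1) (hh : 0 < h) (hh1 : h < 1)
    (hab : a ^ 2 + b ^ 2 = 1) (hcd : c ^ 2 + d ^ 2 = 1)
    (hef : e ^ 2 + f ^ 2 = 1) (hgh : g ^ 2 + h ^ 2 = 1) :
    ¬ ∃ α β : EuclideanSpace ℂ (Fin 4),
      ⟪prodVec4 α β, alphaSt a b c d e f g h 0⟫ ≠ 0 ∧
      ∀ k : Fin 5, k ≠ 0 → ⟪prodVec4 α β, alphaSt a b c d e f g h k⟫ = 0 := by
  rintro ⟨α, β, h1, h0⟩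
  have h2 := h0 1 (by decide)
  have h3 := h0 2 (by decide)
  have h4 := h0 3 (by decide)
  have h5 := h0 4 (by decide)
  simp [alphaSt, prodVec4, PiLp.inner_apply, Fintype.sum_prod_type,
    Fin.sum_univ_four] at h1 h2 h3 h4 h5
  set u := (starRingEnd ℂ) (α 0) * (starRingEnd ℂ) (β 0) with hu_def
  set v := (starRingEnd ℂ) (α 1) * (starRingEnd ℂ) (β 1) with hv_def
  set w := (starRingEnd ℂ) (α 2) * (starRingEnd ℂ) (β 2) with hw_def
  set z := (starRingEnd ℂ) (α 3) * (starRingEnd ℂ) (β 3) with hz_def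
  have hgh' : (g : ℂ) ^ 2 + (h : ℂ) ^ 2 = 1 := by exact_mod_cast hgh
  have ha' : (a : ℂ) ≠ 0 := by exact_mod_cast ha.ne'
  have hb' : (b : ℂ) ≠ 0 := by exact_mod_cast hb.ne'
  have he' : (e : ℂ) ≠ 0 := by exact_mod_cast he.ne'
  -- from h3, h4 : b u = a v and d w = c z
  have hbu : (b : ℂ) * u = (a : ℂ) * v := by
    linear_combination (g : ℂ) * h3 + (h : ℂ) * h4 - ((b : ℂ) * u - (a : ℂ) * v) * hgh'
  -- u ≠ 0
  have hune : u ≠ 0 := by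
    intro hu0
    have hv0 : v = 0 := by
      have : (a : ℂ) * v = 0 := by rw [← hbu, hu0, mul_zero]
      exact (mul_eq_zero.mp this).resolve_left ha'
    have hcw : (e : ℂ) * ((c : ℂ) * w + (d : ℂ) * z) = 0 := by
      linear_combination -h2 + (f : ℂ) * (a : ℂ) * hu0 + (f : ℂ) * (b : ℂ) * hv0
    have hcw' : (c : ℂ) * w + (d : ℂ) * z = 0 :=
      (mul_eq_zero.mp hcw).resolve_left he'
    apply h1
    linear_combination (e : ℂ) * (a : ℂ) * hu0 + (e : ℂ) * (b : ℂ) * hv0 + (f : ℂ) * hcw'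
  have hvne : v ≠ 0 := by
    intro hv0
    apply hune
    have : (b : ℂ) * u = 0 := by rw [hbu, hv0, mul_zero]
    exact (mul_eq_zero.mp this).resolve_left hb'
  have hα0 : (starRingEnd ℂ) (α 0) ≠ 0 := fun hx => hune (by rw [hu_def, hx, zero_mul])
  have hβ1 : (starRingEnd ℂ) (β 1) ≠ 0 := fun hx => hvne (by rw [hv_def, hx, mul_zero])
  rcases h5 with h5 | h5
  · exact hα0 (by rw [h5, map_zero])
  · exact hβ1 (by rw [h5, map_zero])
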